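/- (1) Every locally arcwise connected topological space satisfying the first axiom of countability is arc-generated. (2) Every CW complex is arc-generated. -/

import Mathlib

set_option autoImplicit false

open Set Function Topology

noncomputable section

/-- The topology on `X` coinduced by all continuous curves `ℝ → X`. -/
def arcGen (X : Type) [TopologicalSpace X] : TopologicalSpace X :=
  ⨆ f : {f : ℝ → X // Continuous f}, TopologicalSpace.coinduced f.1 inferInstance

/-- A topological space is arc-generated if its topology is final for the set of all
continuous curves `ℝ → X`, i.e. coincides with the topology coinduced by them. -/
def IsArcGenerated (X : Type) [t : TopologicalSpace X] : Prop := t = arcGen X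

section Basics

theorem arcGen_le (X : Type) [t : TopologicalSpace X] : arcGen X ≤ t :=
  iSup_le fun f => f.2.coinduced_le

theorem isOpen_arcGen_iff {X : Type} [TopologicalSpace X] {U : Set X} :
    IsOpen[arcGen X] U ↔ ∀ f : ℝ → X, Continuous f → IsOpen (f ⁻¹' U) := by
  rw [arcGen, isOpen_iSup_iff]
  exact ⟨fun h f hf => h ⟨f, hf⟩, fun h f => h f.1 f.2⟩

theorem isArcGenerated_of_forall {X : Type} [t : TopologicalSpace X]
    (h : ∀ U : Set X, (∀ f : ℝ → X, Continuous f → IsOpen (f ⁻¹' U)) → IsOpen U) :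
    IsArcGenerated X := by
  refine le_antisymm (TopologicalSpace.le_def.mpr fun U hU => ?_) (arcGen_le X)
  exact h U (isOpen_arcGen_iff.mp hU)

end Basics

section Pieces

/-- The sequence `1, 1/2, 1/3, ...` used to build the intervals for the concatenated curve. -/
private def dSeq (n : ℕ) : ℝ := ((n : ℝ) + 1)⁻¹

private lemma dSeq_pos (n : ℕ) : 0 < dSeq n := by
  have : (0:ℝ) < (n : ℝ) + 1 := by positivity
  exact inv_pos.mpr this

private lemma dSeq_strictAnti : StrictAnti dSeq := by
  intro a b hab
  apply inv_strictAnti₀ (by positivity)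
  exact_mod_cast by exact_mod_cast add_lt_add_left (by exact_mod_cast hab) 1

private lemma dSeq_le_one (n : ℕ) : dSeq n ≤ 1 := by
  rw [dSeq]
  rw [inv_le_one_iff₀]
  right; exact by push_cast; linarith [Nat.cast_nonneg (α := ℝ) n]

private lemma dSeq_zero : dSeq 0 = 1 := by norm_num [dSeq]

private lemma dSeq_succ_lt (n : ℕ) : dSeq (n + 1) < dSeq n :=
  dSeq_strictAnti (Nat.lt_succ_self n)

/-- Affine reparametrization of `[dSeq (n+1), dSeq n]` onto `[0, 1]`. -/
private def eMap (n : ℕ) (t : ℝ) : ℝ := (t - dSeq (n + 1)) / (dSeq n - dSeq (n + 1))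

private lemma eMap_continuous (n : ℕ) : Continuous (eMap n) := by
  unfold eMap
  fun_prop

private lemma eMap_left (n : ℕ) : eMap n (dSeq (n + 1)) = 0 := by simp [eMap]

private lemma eMap_right (n : ℕ) : eMap n (dSeq n) = 1 := by
  rw [eMap, div_self]
  exact ne_of_gt (sub_pos.mpr (dSeq_succ_lt n))

private lemma eMap_mid (n : ℕ) : eMap n ((dSeq (n + 1) + dSeq n) / 2) = 1 / 2 := by
  have h : dSeq n - dSeq (n + 1) ≠ 0 := ne_of_gt (sub_pos.mpr (dSeq_succ_lt n))
  rw [eMap]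
  field_simp
  ring

/-- Every `t ∈ (0, 1]` belongs to the "piece" with index `⌊t⁻¹⌋₊ - 1`. -/
private lemma fit_spec {t : ℝ} (h0 : 0 < t) (h1 : t ≤ 1) :
    dSeq (⌊t⁻¹⌋₊ - 1 + 1) < t ∧ t ≤ dSeq (⌊t⁻¹⌋₊ - 1) := by
  have hinv : (1:ℝ) ≤ t⁻¹ := (one_le_inv₀ h0).mpr h1
  have hm : 1 ≤ ⌊t⁻¹⌋₊ := Nat.le_floor (by exact_mod_cast hinv)
  obtain ⟨k, hk⟩ : ∃ k, ⌊t⁻¹⌋₊ = k + 1 := ⟨⌊t⁻¹⌋₊ - 1, (Nat.succ_pred_eq_of_pos hm).symm⟩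
  rw [hk]
  simp only [Nat.add_sub_cancel]
  constructor
  · -- dSeq (k+1) < t
    have hlt : t⁻¹ < (k:ℝ) + 1 + 1 := by
      have := Nat.lt_floor_add_one t⁻¹
      rw [hk] at this
      push_cast at this
      linarith
    rw [dSeq]
    have := inv_strictAnti₀ (inv_pos.mpr h0) hlt
    rw [inv_inv] at this
    rwa [show ((k + 1 : ℕ):ℝ) + 1 = (k:ℝ) + 1 + 1 by push_cast; ring]
  · -- t ≤ dSeq k
    have hle : ((k:ℝ) + 1) ≤ t⁻¹ := by
      have := Nat.floor_le (le_of_lt (inv_pos.mpr h0))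
      rw [hk] at this
      push_cast at this
      linarith
    rw [dSeq]
    calc t = t⁻¹⁻¹ := (inv_inv t).symm
      _ ≤ ((k:ℝ) + 1)⁻¹ := inv_anti₀ (by positivity) hle

end Pieces

/-- **Part 1**: every locally path-connected first-countable space is arc-generated. -/
theorem isArcGenerated_of_locPathConnected (X : Type) [TopologicalSpace X]
    [LocallyPathConnectedSpace X] [FirstCountableTopology X] : IsArcGenerated X := by
  apply isArcGenerated_of_forall
  intro U hU
  rw [isOpen_iff_mem_nhds]
  intro x hxU
  by_contra hx
  obtain ⟨V, hV, hVb⟩ := (path_connected_basis x).exists_antitone_subbasis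
  have hxV : ∀ n, x ∈ V n := fun n => mem_of_mem_nhds (hV n).1
  have hy : ∀ n, ∃ y, y ∈ V n ∧ y ∉ U := by
    intro n
    by_contra h
    push_neg at h
    exact hx (Filter.mem_of_superset (hV n).1 h)
  choose y hyV hyU using hy
  have hjoin : ∀ n, ∃ p : Path x (y n), ∀ s, p s ∈ V n := fun n =>
    (hV n).2.joinedIn x (hxV n) (y n) (hyV n)
  choose p hp using hjoin
  -- loops based at x, going to y n and back, staying in V n
  let q : ℕ → Path x x := fun n => (p n).trans (p n).symm
  have hq_range : ∀ n, range (q n) ⊆ V n := by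
    intro n
    rw [show q n = (p n).trans (p n).symm from rfl, Path.trans_range, (p n).symm_range]
    rw [union_self]
    rintro _ ⟨s, rfl⟩
    exact hp n s
  -- the concatenated curve
  let γ : ℝ → X := fun t =>
    if h : 0 < t ∧ t ≤ 1 then (q (⌊t⁻¹⌋₊ - 1)).extend (eMap (⌊t⁻¹⌋₊ - 1) t) else x
  have hconst : ∀ t, ¬(0 < t ∧ t ≤ 1) → γ t = x := fun t ht => dif_neg ht
  have hγ0 : γ 0 = x := hconst 0 (by norm_num)
  -- the piece formula
  have hpiece : ∀ n, ∀ t ∈ Icc (dSeq (n + 1)) (dSeq n), γ t = (q n).extend (eMap n t) := by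
    rintro n t ⟨ht1, ht2⟩
    have h0 : 0 < t := lt_of_lt_of_le (dSeq_pos (n + 1)) ht1
    have h1 : t ≤ 1 := le_trans ht2 (dSeq_le_one n)
    rw [show γ t = (q (⌊t⁻¹⌋₊ - 1)).extend (eMap (⌊t⁻¹⌋₊ - 1) t) from dif_pos ⟨h0, h1⟩]
    obtain ⟨hf1, hf2⟩ := fit_spec h0 h1
    generalize hkdef : ⌊t⁻¹⌋₊ - 1 = k at hf1 hf2 ⊢
    -- k = n or k = n + 1
    have hkn : n ≤ k := by
      have : dSeq (k + 1) < dSeq n := lt_of_lt_of_le hf1 ht2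
      have := (StrictAnti.lt_iff_gt dSeq_strictAnti).mp this
      omega
    have hkn' : k ≤ n + 1 := by
      have : dSeq (n + 1) ≤ dSeq k := le_trans ht1 hf2
      have := (StrictAnti.le_iff_ge dSeq_strictAnti).mp this
      omega
    have hcase : k = n ∨ k = n + 1 := by omega
    rcases hcase with rfl | rfl
    · rfl
    · -- t = dSeq (n+1); both sides equal x
      have ht : t = dSeq (n + 1) := le_antisymm (by exact_mod_cast hf2) ht1
      rw [ht, eMap_left, Path.extend_zero, show eMap (n+1) (dSeq (n+1)) = 1 from eMap_right (n+1),
        Path.extend_one]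
  have hmem : ∀ n, ∀ t ∈ Icc (dSeq (n + 1)) (dSeq n), γ t ∈ V n := by
    intro n t ht
    rw [hpiece n t ht]
    exact hq_range n ((q n).extend_range ▸ mem_range_self _)
  have hcontOn : ∀ n, ContinuousOn γ (Icc (dSeq (n + 1)) (dSeq n)) := by
    intro n
    exact (((q n).continuous_extend).comp (eMap_continuous n)).continuousOn.congr (hpiece n)
  have hγ1 : ∀ s ∈ Ici (1:ℝ), γ s = x := by
    intro s hs
    rcases eq_or_lt_of_le (mem_Ici.mp hs) with h | h
    · rw [← h]
      have h10 : dSeq 1 ≤ 1 := by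
        rw [← dSeq_zero]; exact le_of_lt (dSeq_succ_lt 0)
      have : (1:ℝ) ∈ Icc (dSeq 1) (dSeq 0) := ⟨h10, le_of_eq dSeq_zero.symm⟩
      rw [hpiece 0 1 this, show (1:ℝ) = dSeq 0 from dSeq_zero.symm, eMap_right, Path.extend_one]
    · exact hconst s (by intro ⟨_, h2⟩; linarith)
  -- continuity
  have hcont : Continuous γ := by
    rw [continuous_iff_continuousAt]
    intro t₀
    rcases lt_trichotomy t₀ 0 with h | h | h
    · -- negative: locally constant
      apply ContinuousAt.congr continuousAt_const
      filter_upwards [Iio_mem_nhds h] with s hs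
      exact (hconst s (by intro ⟨h1, _⟩; exact absurd h1 (not_lt.mpr (le_of_lt hs)))).symm
    · -- at 0
      subst h
      rw [ContinuousAt, hγ0, hVb.toHasBasis.tendsto_right_iff]
      intro n _
      filter_upwards [Ioo_mem_nhds (by linarith [dSeq_pos n] : -dSeq n < 0) (dSeq_pos n)]
        with s hs
      rcases le_or_gt s 0 with hs0 | hs0
      · rw [hconst s (by intro ⟨h1, _⟩; linarith)]
        exact hxV n
      · have hs1 : s ≤ 1 := le_trans (le_of_lt hs.2) (dSeq_le_one n)
        obtain ⟨hf1, hf2⟩ := fit_spec hs0 hs1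
        generalize hkdef : ⌊s⁻¹⌋₊ - 1 = k at hf1 hf2
        have hkn : n ≤ k := by
          have : dSeq (k + 1) < dSeq n := lt_trans hf1 hs.2
          have := (StrictAnti.lt_iff_gt dSeq_strictAnti).mp this
          omega
        exact hVb.antitone hkn (hmem k s ⟨le_of_lt hf1, hf2⟩)
    · rcases lt_or_ge 1 t₀ with h1 | h1
      · -- beyond 1: locally constant
        apply ContinuousAt.congr continuousAt_const
        filter_upwards [Ioi_mem_nhds h1] with s hs
        exact (hγ1 s (mem_Ici.mpr (le_of_lt hs))).symm
      · -- t₀ ∈ (0, 1]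
        obtain ⟨hf1, hf2⟩ := fit_spec h h1
        generalize hkdef : ⌊t₀⁻¹⌋₊ - 1 = k at hf1 hf2
        rw [continuousAt_iff_continuous_left_right]
        constructor
        · -- left
          refine ((hcontOn k) t₀ ⟨le_of_lt hf1, hf2⟩).mono_of_mem_nhdsWithin ?_
          rw [mem_nhdsWithin]
          exact ⟨Ioi (dSeq (k + 1)), isOpen_Ioi, hf1, by
            rintro s ⟨hs1, hs2⟩
            exact ⟨le_of_lt hs1, le_trans hs2 hf2⟩⟩
        · -- right
          rcases eq_or_lt_of_le hf2 with heq | hlt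
          · -- t₀ is the right endpoint dSeq k
            obtain _ | j := k
            · have ht1 : t₀ = 1 := by rw [heq, dSeq_zero]
              subst ht1
              exact ContinuousWithinAt.congr continuousWithinAt_const hγ1
                (hγ1 1 (mem_Ici.mpr le_rfl))
            · refine ((hcontOn j) t₀ ⟨ge_of_eq heq,
                by rw [heq]; exact le_of_lt (dSeq_succ_lt j)⟩).mono_of_mem_nhdsWithin ?_
              rw [mem_nhdsWithin]
              refine ⟨Iio (dSeq j), isOpen_Iio, by rw [heq]; exact dSeq_succ_lt j, ?_⟩
              rintro s ⟨hs1, hs2⟩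
              exact ⟨by rw [← heq]; exact hs2, le_of_lt hs1⟩
          · -- t₀ in the interior towards the right
            refine ((hcontOn k) t₀ ⟨le_of_lt hf1, hf2⟩).mono_of_mem_nhdsWithin ?_
            rw [mem_nhdsWithin]
            refine ⟨Iio (dSeq k), isOpen_Iio, hlt, ?_⟩
            rintro s ⟨hs1, hs2⟩
            exact ⟨le_trans (le_of_lt hf1) hs2, le_of_lt hs1⟩
  -- derive the contradiction
  have hopen : IsOpen (γ ⁻¹' U) := hU γ hcont
  have h0mem : (0:ℝ) ∈ γ ⁻¹' U := by rw [mem_preimage, hγ0]; exact hxU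
  obtain ⟨ε, hε, hball⟩ := Metric.isOpen_iff.mp hopen 0 h0mem
  obtain ⟨n, hn⟩ := exists_nat_one_div_lt hε
  have hdn : dSeq n < ε := by
    rw [dSeq]
    rw [one_div] at hn
    exact hn
  set t := (dSeq (n + 1) + dSeq n) / 2 with htdef
  have ht1 : dSeq (n + 1) < t := by
    rw [htdef]; linarith [dSeq_succ_lt n]
  have ht2 : t < dSeq n := by
    rw [htdef]; linarith [dSeq_succ_lt n]
  have htpos : 0 < t := lt_trans (dSeq_pos (n+1)) ht1
  have htball : t ∈ Metric.ball (0:ℝ) ε := by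
    rw [Metric.mem_ball, Real.dist_eq, sub_zero, abs_of_pos htpos]
    exact lt_trans ht2 hdn
  have hγt : γ t = y n := by
    rw [hpiece n t ⟨le_of_lt ht1, le_of_lt ht2⟩]
    rw [show eMap n t = 1/2 by rw [htdef]; exact eMap_mid n]
    rw [Path.extend_apply (q n) (by norm_num : (1:ℝ)/2 ∈ Icc (0:ℝ) 1)]
    rw [show q n = (p n).trans (p n).symm from rfl, Path.trans_apply]
    rw [dif_pos (by norm_num)]
    rw [show (⟨2 * (1/2 : ℝ), by norm_num⟩ : unitInterval) = 1 by ext; norm_num]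
    exact (p n).target
  exact hyU n (hγt ▸ hball htball)


section Delta

open TopologicalSpace

/-- A coinduced topology from a delta-generated space is at most the delta-generated topology. -/
theorem coinduced_le_deltaGenerated {W X : Type*} [tW : TopologicalSpace W]
    [tX : TopologicalSpace X] (hW : DeltaGeneratedSpace W) {g : W → X} (hg : Continuous g) :
    tW.coinduced g ≤ TopologicalSpace.generatedBy (fun n => Fin n → ℝ) (Y := X) := by
  haveI := hW
  exact le_trans (IsGeneratedBy.iff_le_generatedBy.1
    (IsGeneratedBy.coinduced (X := fun n => Fin n → ℝ) g))
    (TopologicalSpace.generatedBy_mono hg.coinduced_le)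

/-- Arc-generated spaces are delta-generated. -/
theorem deltaGeneratedSpace_of_isArcGenerated {X : Type} [t : TopologicalSpace X]
    (h : IsArcGenerated X) : DeltaGeneratedSpace X := by
  have key : @IsGeneratedBy _ (fun n => Fin n → ℝ) _ X (arcGen X) := by
    apply IsGeneratedBy.iSup
    rintro ⟨c, hc⟩
    let e := Homeomorph.funUnique (Fin 1) ℝ
    have he : (inferInstance : TopologicalSpace ℝ) =
        TopologicalSpace.coinduced e inferInstance := e.isQuotientMap.eq_coinduced
    rw [he, coinduced_compose]
    exact IsGeneratedBy.coinduced (X := fun n => Fin n → ℝ) (Y := Fin 1 → ℝ) (c ∘ e)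
  rw [IsArcGenerated] at h
  rw [h]
  exact key

/-- Delta-generated spaces are arc-generated (using that `ℝⁿ` is arc-generated). -/
theorem isArcGenerated_of_deltaGeneratedSpace {X : Type} [t : TopologicalSpace X]
    (h : DeltaGeneratedSpace X) : IsArcGenerated X := by
  refine le_antisymm ?_ (arcGen_le X)
  refine le_trans (IsGeneratedBy.iff_le_generatedBy.1 h) ?_
  rw [TopologicalSpace.generatedBy]
  refine iSup₂_le fun n p => ?_
  have hn : IsArcGenerated (Fin n → ℝ) := isArcGenerated_of_locPathConnected _
  refine le_trans (coinduced_mono (le_of_eq hn)) ?_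
  rw [arcGen, coinduced_iSup]
  apply iSup_le
  intro c
  rw [coinduced_compose]
  exact le_iSup_of_le ⟨p ∘ c.1, p.continuous.comp c.2⟩ le_rfl

theorem deltaGeneratedSpace_of_isEmpty {X : Type*} [t : TopologicalSpace X] [IsEmpty X] :
    DeltaGeneratedSpace X := by
  refine IsGeneratedBy.iff_le_generatedBy.2 ?_
  rw [TopologicalSpace.le_def]
  intro U _
  rw [Set.eq_empty_of_isEmpty U]
  exact isOpen_empty

/-- Convex subsets of real normed spaces are locally path-connected. -/
theorem Convex.locPathConnectedSpace' {E : Type*} [NormedAddCommGroup E] [NormedSpace ℝ E]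
    {s : Set E} (hs : Convex ℝ s) : LocPathConnectedSpace s := by
  refine LocPathConnectedSpace.of_bases (p := fun (x : s) (ε : ℝ) => 0 < ε)
    (s := fun (x : s) (ε : ℝ) => Subtype.val ⁻¹' Metric.ball (x : E) ε) (fun x => ?_)
    (fun x ε hε => ?_)
  · rw [nhds_induced]
    exact Metric.nhds_basis_ball.comap _
  · rw [Topology.IsInducing.subtypeVal.isPathConnected_iff, Subtype.image_preimage_coe]
    exact (hs.inter (convex_ball _ _)).isPathConnected
      ⟨x, x.2, Metric.mem_ball_self hε⟩

end Delta

section CW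

open CategoryTheory Limits TopologicalSpace

theorem deltaGeneratedSpace_of_isColimit {J : Type} [SmallCategory J] {F : J ⥤ TopCat.{0}}
    (c : Cocone F) (hc : IsColimit c)
    (h : ∀ j, DeltaGeneratedSpace ↥(F.obj j)) : DeltaGeneratedSpace ↥c.pt := by
  refine IsGeneratedBy.iff_le_generatedBy.2 ?_
  refine le_trans (le_of_eq (TopCat.coinduced_of_isColimit c hc)) ?_
  exact iSup_le fun j => coinduced_le_deltaGenerated (h j) (c.ι.app j).hom.continuous

theorem deltaGeneratedSpace_pushout {Z A B P : TopCat.{0}} {f : Z ⟶ A} {g : Z ⟶ B}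
    {inl : A ⟶ P} {inr : B ⟶ P} (hP : IsPushout f g inl inr)
    (hA : DeltaGeneratedSpace ↥A) (hB : DeltaGeneratedSpace ↥B) :
    DeltaGeneratedSpace ↥P := by
  refine IsGeneratedBy.iff_le_generatedBy.2 ?_
  refine le_trans (le_of_eq (TopCat.coinduced_of_isColimit _ hP.isColimit)) ?_
  apply iSup_le
  intro j
  rcases j with _ | ⟨_ | _⟩
  · show TopologicalSpace.coinduced (⇑inl ∘ ⇑f) Z.str ≤ _
    rw [← coinduced_compose]
    exact le_trans (coinduced_mono f.hom.continuous.coinduced_le)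
      (coinduced_le_deltaGenerated hA inl.hom.continuous)
  · exact coinduced_le_deltaGenerated hA inl.hom.continuous
  · exact coinduced_le_deltaGenerated hB inr.hom.continuous

theorem deltaGeneratedSpace_homeomorph {X Y : Type*} [TopologicalSpace X] [TopologicalSpace Y]
    (e : X ≃ₜ Y) (h : DeltaGeneratedSpace X) : DeltaGeneratedSpace Y :=
  haveI := h
  e.isQuotientMap.isGeneratedBy

theorem deltaGeneratedSpace_disk (n : ℕ) : DeltaGeneratedSpace ↥(TopCat.disk.{0} n) := by
  have h1 : LocallyPathConnectedSpace
      (Metric.closedBall (0 : EuclideanSpace ℝ (Fin n)) 1) :=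
    (convex_closedBall _ _).locPathConnectedSpace'
  have h2 : DeltaGeneratedSpace (Metric.closedBall (0 : EuclideanSpace ℝ (Fin n)) 1) :=
    deltaGeneratedSpace_of_isArcGenerated (isArcGenerated_of_locPathConnected _)
  exact deltaGeneratedSpace_homeomorph (Homeomorph.ulift.symm) h2

theorem deltaGeneratedSpace_sk (C : TopCat.{0}) (hC : TopCat.CWComplex C) (n : ℕ) :
    DeltaGeneratedSpace ↥(hC.F.obj n) := by
  induction n with
  | zero =>
    have h0 : DeltaGeneratedSpace ↥(⊥_ TopCat.{0}) :=
      deltaGeneratedSpace_of_isColimit (F := Functor.empty TopCat.{0}) _ (colimit.isColimit _)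
        (fun j => j.as.elim)
    exact deltaGeneratedSpace_homeomorph (TopCat.homeoOfIso hC.isoBot.symm) h0
  | succ n ih =>
    let c := hC.attachCells n (not_isMax n)
    have hB : DeltaGeneratedSpace ↥c.cofan₂.pt :=
      deltaGeneratedSpace_of_isColimit _ c.isColimit₂ (fun _ => deltaGeneratedSpace_disk _)
    exact deltaGeneratedSpace_pushout c.isPushout ih hB

end CW

/-- **Statement 6.** (1) Every locally arcwise connected topological space satisfying
the first axiom of countability is arc-generated. (2) Every CW complex is
arc-generated. -/
theorem locPathConnected_and_CW_arcGenerated :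
    (∀ (X : Type) [TopologicalSpace X], LocPathConnectedSpace X →
      FirstCountableTopology X → IsArcGenerated X) ∧
    ∀ (C : TopCat.{0}) (_ : TopCat.CWComplex C),
      IsArcGenerated ↥C := by
  constructor
  · intro X _ h1 h2
    exact @isArcGenerated_of_locPathConnected X _ h1 h2
  · intro C hC
    apply isArcGenerated_of_deltaGeneratedSpace
    exact deltaGeneratedSpace_of_isColimit _ hC.isColimit (deltaGeneratedSpace_sk C hC)
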